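/- There exists a universal constant C > 0 such that for every integer k ≥ 2, every integer t ≥ 1, and every probability vector p : {1,...,k} → (0,1] (Σ_{i=1}^k p_i = 1), the random variable W = log₂(X/t) — where i ~ p is drawn first and then X ~ NB(t, p_i) — satisfies Var[W] ≤ C·(log₂ k)². Explicitly: Σ_{i=1}^k p_i Σ_{ℓ=t}^∞ C(ℓ−1,t−1)p_i^t(1−p_i)^{ℓ−t}·(log₂(ℓ/t))² − ( Σ_{i=1}^k p_i Σ_{ℓ=t}^∞ C(ℓ−1,t−1)p_i^t(1−p_i)^{ℓ−t}·log₂(ℓ/t) )² ≤ C·(log₂ k)². -/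

import Mathlib

/-- The negative binomial pmf `NB(t,p)` at `ℓ`. -/
noncomputable def nbPMF (t : ℕ) (p : ℝ) (ℓ : ℕ) : ℝ :=
  ((ℓ - 1).choose (t - 1) : ℝ) * p ^ t * (1 - p) ^ (ℓ - t)

section AuxLemmas
open Real


-- log y ≤ 2 √y for y > 0
lemma log_le_two_sqrt {y : ℝ} (hy : 0 < y) : Real.log y ≤ 2 * Real.sqrt y := by
  have h1 : Real.log (Real.sqrt y) ≤ Real.sqrt y - 1 :=
    Real.log_le_sub_one_of_pos (Real.sqrt_pos.2 hy)
  have h2 : Real.log (Real.sqrt y) = Real.log y / 2 := Real.log_sqrt hy.le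
  nlinarith [Real.sqrt_nonneg y]

-- log(1/p) ≤ 4 * p^(-(1/4))
lemma log_inv_le {p : ℝ} (hp : 0 < p) : Real.log (1/p) ≤ 4 * p ^ (-(1/4 : ℝ)) := by
  have h1 : Real.log (p ^ (-(1/4:ℝ))) ≤ p ^ (-(1/4:ℝ)) - 1 :=
    Real.log_le_sub_one_of_pos (Real.rpow_pos_of_pos hp _)
  have h2 : Real.log (p ^ (-(1/4:ℝ))) = -(1/4) * Real.log p := Real.log_rpow hp _
  have h3 : Real.log (1/p) = - Real.log p := by
    rw [one_div, Real.log_inv]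
  nlinarith [Real.rpow_pos_of_pos hp (-(1/4:ℝ))]

-- p * (logb 2 (1/p))^2 ≤ 16/(log 2)^2 * sqrt p, for p ∈ (0,1]
lemma sq_logb_mul_le {p : ℝ} (hp : 0 < p) (hp1 : p ≤ 1) :
    p * (Real.logb 2 (1/p))^2 ≤ 16 / (Real.log 2)^2 * Real.sqrt p := by
  have hl2 : (0:ℝ) < Real.log 2 := Real.log_pos one_lt_two
  have hL0 : 0 ≤ Real.log (1/p) := Real.log_nonneg (by rw [one_div]; exact (one_le_one_div hp hp1).trans_eq (one_div p))
  have hle : Real.log (1/p) ≤ 4 * p ^ (-(1/4:ℝ)) := log_inv_le hp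
  have hsq : (Real.log (1/p))^2 ≤ 16 * p ^ (-(1/2:ℝ)) := by
    have : (Real.log (1/p))^2 ≤ (4 * p ^ (-(1/4:ℝ)))^2 := by
      apply pow_le_pow_left₀ hL0 hle
    calc (Real.log (1/p))^2 ≤ (4 * p ^ (-(1/4:ℝ)))^2 := this
      _ = 16 * (p ^ (-(1/4:ℝ)))^2 := by ring
      _ = 16 * p ^ (-(1/2:ℝ)) := by
          rw [← Real.rpow_natCast (p ^ (-(1/4:ℝ))) 2, ← Real.rpow_mul hp.le]
          norm_num
  have key : p * (Real.log (1/p))^2 ≤ 16 * Real.sqrt p := by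
    have h4 : p * (16 * p ^ (-(1/2:ℝ))) = 16 * Real.sqrt p := by
      rw [Real.sqrt_eq_rpow]
      rw [show p * (16 * p ^ (-(1/2:ℝ))) = 16 * (p ^ (1:ℝ) * p ^ (-(1/2:ℝ))) by
        rw [Real.rpow_one]; ring]
      rw [← Real.rpow_add hp]
      norm_num
    calc p * (Real.log (1/p))^2 ≤ p * (16 * p ^ (-(1/2:ℝ))) := by
          exact mul_le_mul_of_nonneg_left hsq hp.le
      _ = 16 * Real.sqrt p := h4
  have hlogb : (Real.logb 2 (1/p))^2 = (Real.log (1/p))^2 / (Real.log 2)^2 := by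
    rw [Real.logb]; rw [div_pow]
  rw [hlogb]
  rw [show p * (Real.log (1/p) ^ 2 / Real.log 2 ^ 2) = (p * Real.log (1/p)^2) / Real.log 2^2 by ring,
    show 16 / Real.log 2 ^2 * Real.sqrt p = (16 * Real.sqrt p) / Real.log 2^2 by ring]
  exact div_le_div_of_nonneg_right key (by positivity)



-- log y ≤ 2 √y for y > 0
-- pointwise: (logb 2 x)^2 ≤ 2 (logb 2 (1/p))^2 + 8/(log2)^2 * (p*x), for x ≥ 1, p ∈ (0,1]
lemma pointwise_bound {x p : ℝ} (hx : 1 ≤ x) (hp : 0 < p) (hp1 : p ≤ 1) :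
    (Real.logb 2 x)^2 ≤ 2 * (Real.logb 2 (1/p))^2 + 8 / (Real.log 2)^2 * (p * x) := by
  have hl2 : (0:ℝ) < Real.log 2 := Real.log_pos one_lt_two
  have hx0 : (0:ℝ) < x := lt_of_lt_of_le one_pos hx
  have hxlog : 0 ≤ Real.log x := Real.log_nonneg hx
  have ha : 0 ≤ Real.log (1/p) :=
    Real.log_nonneg (one_le_one_div hp hp1)
  have hb : 0 ≤ 2 * Real.sqrt (p * x) := by positivity
  have hsplit : Real.log x = Real.log (1/p) + Real.log (p * x) := by
    rw [← Real.log_mul (by positivity) (by positivity)]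
    congr 1; field_simp
  have hle : Real.log x ≤ Real.log (1/p) + 2 * Real.sqrt (p * x) := by
    rw [hsplit]
    exact add_le_add (le_refl _) (log_le_two_sqrt (by positivity))
  have hsq2 : (Real.sqrt (p * x))^2 = p * x := Real.sq_sqrt (by positivity)
  have key : (Real.log x)^2 ≤ 2 * (Real.log (1/p))^2 + 8 * (p * x) := by
    nlinarith [sq_nonneg (Real.log (1/p) - 2 * Real.sqrt (p*x)), sq_nonneg (Real.log x)]
  have e1 : (Real.logb 2 x)^2 = (Real.log x)^2 / (Real.log 2)^2 := by rw [Real.logb, div_pow]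
  have e2 : (Real.logb 2 (1/p))^2 = (Real.log (1/p))^2 / (Real.log 2)^2 := by
    rw [Real.logb, div_pow]
  rw [e1, e2]
  rw [show 2 * ((Real.log (1/p))^2 / (Real.log 2)^2) + 8/(Real.log 2)^2 * (p*x)
      = (2 * (Real.log (1/p))^2 + 8 * (p*x)) / (Real.log 2)^2 by ring]
  exact div_le_div_of_nonneg_right key (by positivity)

-- normalization
lemma hasSum_nb {t : ℕ} (ht : 1 ≤ t) {p : ℝ} (hp : 0 < p) (hp1 : p ≤ 1) :
    HasSum (fun n : ℕ => nbPMF t p (t + n)) 1 := by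
  have hr : ‖(1 - p : ℝ)‖ < 1 := by
    rw [Real.norm_eq_abs, abs_lt]; constructor <;> linarith
  have base := hasSum_choose_mul_geometric_of_norm_lt_one (𝕜 := ℝ) (t - 1) hr
  have h := base.mul_left (p ^ t)
  have e : (1 - (1 - p) : ℝ) = p := by ring
  rw [e] at h
  have ht1 : t - 1 + 1 = t := by omega
  rw [ht1] at h
  have hval : p ^ t * (1 / p ^ t) = 1 := by
    field_simp
  rw [hval] at h
  convert h using 2 with n
  case e'_3 => rfl
  unfold nbPMF
  have e1 : t + n - 1 = n + (t - 1) := by omega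
  have e2 : t + n - t = n := by omega
  rw [e1, e2]; ring

-- mean
lemma hasSum_nb_mul {t : ℕ} (ht : 1 ≤ t) {p : ℝ} (hp : 0 < p) (hp1 : p ≤ 1) :
    HasSum (fun n : ℕ => nbPMF t p (t + n) * ((t + n : ℕ) : ℝ)) (t / p) := by
  have hr : ‖(1 - p : ℝ)‖ < 1 := by
    rw [Real.norm_eq_abs, abs_lt]; constructor <;> linarith
  have base := hasSum_choose_mul_geometric_of_norm_lt_one (𝕜 := ℝ) t hr
  have h := base.mul_left ((t : ℝ) * p ^ t)
  have e : (1 - (1 - p) : ℝ) = p := by ring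
  rw [e] at h
  have hval : (t : ℝ) * p ^ t * (1 / p ^ (t + 1)) = t / p := by
    rw [pow_succ]; field_simp
  rw [hval] at h
  convert h using 2 with n
  case e'_3 => rfl
  unfold nbPMF
  have e2 : t + n - t = n := by omega
  rw [e2]
  have hid : ((t + n : ℕ) : ℝ) * ((t + n - 1).choose (t - 1) : ℝ)
      = (t : ℝ) * ((n + t).choose t : ℝ) := by
    have : (t + n) * ((t + n - 1).choose (t - 1)) = t * ((n + t).choose t) := by
      have h1 := Nat.add_one_mul_choose_eq (n + (t - 1)) (t - 1)
      have e1 : n + (t - 1) + 1 = t + n := by omega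
      rw [e1] at h1
      have e4 : t - 1 + 1 = t := by omega
      rw [e4] at h1
      have e5 : t + n - 1 = n + (t - 1) := by omega
      rw [e5, h1, Nat.add_comm t n, Nat.mul_comm]
    exact_mod_cast congrArg (Nat.cast : ℕ → ℝ) this
  push_cast at hid ⊢
  linear_combination p ^ t * (1 - p) ^ n * hid


lemma nb_nonneg {t : ℕ} {p : ℝ} (hp : 0 < p) (hp1 : p ≤ 1) (ℓ : ℕ) :
    0 ≤ nbPMF t p ℓ := by
  unfold nbPMF
  have : (0:ℝ) ≤ 1 - p := by linarith
  positivity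

lemma inner_bound {t : ℕ} (ht : 1 ≤ t) {p : ℝ} (hp : 0 < p) (hp1 : p ≤ 1) :
    ∑' n : ℕ, nbPMF t p (t + n) * (Real.logb 2 (((t + n : ℕ) : ℝ) / (t : ℝ)))^2
      ≤ 2 * (Real.logb 2 (1/p))^2 + 8 / (Real.log 2)^2 := by
  have hl2 : (0:ℝ) < Real.log 2 := Real.log_pos one_lt_two
  have ht0 : (0:ℝ) < (t : ℝ) := by exact_mod_cast ht
  set L2 : ℝ := 2 * (Real.logb 2 (1/p))^2 with hL2
  set c : ℝ := 8 / (Real.log 2)^2 with hc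
  have hg : HasSum (fun n : ℕ => nbPMF t p (t + n) *
      (L2 + c * (p * (((t + n : ℕ) : ℝ) / (t : ℝ))))) (L2 + c) := by
    have h1 := (hasSum_nb ht hp hp1).mul_left L2
    have h2 := (hasSum_nb_mul ht hp hp1).mul_left (c * p / t)
    have := h1.add h2
    have hval : L2 * 1 + c * p / t * ((t:ℝ) / p) = L2 + c := by
      field_simp
    rw [hval] at this
    convert this using 2 with n
    case e'_3 => rfl
    ring
  have hfg : ∀ n : ℕ, nbPMF t p (t + n) * (Real.logb 2 (((t + n : ℕ) : ℝ) / (t : ℝ)))^2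
      ≤ nbPMF t p (t + n) * (L2 + c * (p * (((t + n : ℕ) : ℝ) / (t : ℝ)))) := by
    intro n
    apply mul_le_mul_of_nonneg_left _ (nb_nonneg hp hp1 _)
    have hx : (1:ℝ) ≤ ((t + n : ℕ) : ℝ) / (t : ℝ) := by
      rw [le_div_iff₀ ht0]
      push_cast
      linarith [Nat.cast_nonneg (α := ℝ) n]
    exact pointwise_bound hx hp hp1
  have hf_nonneg : ∀ n : ℕ,
      0 ≤ nbPMF t p (t + n) * (Real.logb 2 (((t + n : ℕ) : ℝ) / (t : ℝ)))^2 :=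
    fun n => mul_nonneg (nb_nonneg hp hp1 _) (sq_nonneg _)
  have hf_sum : Summable (fun n : ℕ =>
      nbPMF t p (t + n) * (Real.logb 2 (((t + n : ℕ) : ℝ) / (t : ℝ)))^2) :=
    Summable.of_nonneg_of_le hf_nonneg hfg hg.summable
  calc _ ≤ ∑' n : ℕ, nbPMF t p (t + n) * (L2 + c * (p * (((t + n : ℕ) : ℝ) / (t : ℝ)))) :=
        Summable.tsum_le_tsum hfg hf_sum hg.summable
    _ = L2 + c := hg.tsum_eq

end AuxLemmas

/-- There is a universal constant `C > 0` such that for every integer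
`k ≥ 2`, every integer `t ≥ 1`, and every probability vector `p` on `{1,…,k}` with
entries in `(0,1]`, the random variable `W = log₂(X/t)` (draw `i ~ p`, then
`X ~ NB(t, p_i)`) has variance at most `C·(log₂ k)²`:
`E[W²] − (E[W])² ≤ C (log₂ k)²`. -/
theorem variance_log_estimator_bound :
    ∃ C : ℝ, 0 < C ∧
      ∀ k t : ℕ, 2 ≤ k → 1 ≤ t →
        ∀ p : Fin k → ℝ, (∀ i, p i ∈ Set.Ioc (0 : ℝ) 1) → (∑ i, p i = 1) →
          (∑ i, p i * ∑' n : ℕ, nbPMF t (p i) (t + n) *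
              (Real.logb 2 (((t + n : ℕ) : ℝ) / (t : ℝ))) ^ 2)
            - (∑ i, p i * ∑' n : ℕ, nbPMF t (p i) (t + n) *
                Real.logb 2 (((t + n : ℕ) : ℝ) / (t : ℝ))) ^ 2
          ≤ C * (Real.logb 2 (k : ℝ)) ^ 2 := by
  have hl2 : (0:ℝ) < Real.log 2 := Real.log_pos one_lt_two
  refine ⟨8 + 40 / (Real.log 2)^2, by positivity, ?_⟩
  intro k t hk ht p hp hsum
  have hk0 : (0:ℝ) < (k : ℝ) := by positivity
  have hk2 : (2:ℝ) ≤ (k : ℝ) := by exact_mod_cast hk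
  set K : ℝ := Real.logb 2 (k : ℝ) with hKdef
  have hK1 : 1 ≤ K := by
    rw [hKdef, show (1:ℝ) = Real.logb 2 2 from (Real.logb_self_eq_one one_lt_two).symm]
    exact Real.logb_le_logb_of_le one_lt_two two_pos hk2
  -- drop the squared mean
  apply le_trans (sub_le_self _ (sq_nonneg _))
  -- bound each i-th term
  have hterm : ∀ i : Fin k, p i * ∑' n : ℕ, nbPMF t (p i) (t + n) *
        (Real.logb 2 (((t + n : ℕ) : ℝ) / (t : ℝ))) ^ 2
      ≤ p i * (8 * K^2) + (32 / (Real.log 2)^2) * (1/(k:ℝ)) + p i * (8 / (Real.log 2)^2) := by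
    intro i
    obtain ⟨hpi0, hpi1⟩ := hp i
    have hLnn : 0 ≤ Real.logb 2 (1/(p i)) := by
      apply Real.logb_nonneg one_lt_two
      exact one_le_one_div hpi0 hpi1
    have h1 : p i * ∑' n : ℕ, nbPMF t (p i) (t + n) *
          (Real.logb 2 (((t + n : ℕ) : ℝ) / (t : ℝ))) ^ 2
        ≤ p i * (2 * (Real.logb 2 (1/(p i)))^2 + 8 / (Real.log 2)^2) :=
      mul_le_mul_of_nonneg_left (inner_bound ht hpi0 hpi1) hpi0.le
    have h2 : p i * (Real.logb 2 (1/(p i)))^2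
        ≤ p i * (4 * K^2) + (16 / (Real.log 2)^2) * (1/(k:ℝ)) := by
      by_cases hcase : ((k:ℝ)^2)⁻¹ ≤ p i
      · have hbound : Real.logb 2 (1/(p i)) ≤ 2 * K := by
          have h1p : 1/(p i) ≤ (k:ℝ)^2 := by
            rw [div_le_iff₀ hpi0]
            rw [← div_le_iff₀' (by positivity : (0:ℝ) < (k:ℝ)^2), one_div]
            exact hcase
          calc Real.logb 2 (1/(p i)) ≤ Real.logb 2 ((k:ℝ)^2) :=
                Real.logb_le_logb_of_le one_lt_two (by positivity) h1p
            _ = 2 * K := by rw [hKdef, Real.logb_pow]; push_cast; ring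
        have hsq : (Real.logb 2 (1/(p i)))^2 ≤ 4 * K^2 := by nlinarith
        have := mul_le_mul_of_nonneg_left hsq hpi0.le
        have hnn : (0:ℝ) ≤ (16 / (Real.log 2)^2) * (1/(k:ℝ)) := by positivity
        linarith
      · push_neg at hcase
        have hsqrt : Real.sqrt (p i) ≤ 1/(k:ℝ) := by
          rw [show (1/(k:ℝ)) = Real.sqrt (((k:ℝ)^2)⁻¹) by
            rw [Real.sqrt_inv, Real.sqrt_sq hk0.le, one_div]]
          exact Real.sqrt_le_sqrt hcase.le
        have := (sq_logb_mul_le hpi0 hpi1).trans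
          (mul_le_mul_of_nonneg_left hsqrt (by positivity))
        have hnn : (0:ℝ) ≤ p i * (4 * K^2) := by positivity
        linarith
    have h1' : p i * ∑' n : ℕ, nbPMF t (p i) (t + n) *
          (Real.logb 2 (((t + n : ℕ) : ℝ) / (t : ℝ))) ^ 2
        ≤ 2 * (p i * (Real.logb 2 (1/(p i)))^2) + p i * (8 / (Real.log 2)^2) :=
      h1.trans_eq (by ring)
    have e1 : p i * (8 * K^2) = 2 * (p i * (4 * K^2)) := by ring
    have e2 : 32 / (Real.log 2)^2 * (1/(k:ℝ)) = 2 * (16 / (Real.log 2)^2 * (1/(k:ℝ))) := by ring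
    linarith [h1', h2, e1, e2]
  calc (∑ i, p i * ∑' n : ℕ, nbPMF t (p i) (t + n) *
          (Real.logb 2 (((t + n : ℕ) : ℝ) / (t : ℝ))) ^ 2)
      ≤ ∑ i : Fin k, (p i * (8 * K^2) + (32 / (Real.log 2)^2) * (1/(k:ℝ))
          + p i * (8 / (Real.log 2)^2)) := Finset.sum_le_sum (fun i _ => hterm i)
    _ = 8 * K^2 + 32 / (Real.log 2)^2 + 8 / (Real.log 2)^2 := by
        rw [Finset.sum_add_distrib, Finset.sum_add_distrib, ← Finset.sum_mul,
          ← Finset.sum_mul, ← Finset.sum_mul, hsum, Finset.sum_const,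
          Finset.card_univ, Fintype.card_fin, nsmul_eq_mul]
        have hkne : (k:ℝ) ≠ 0 := hk0.ne'
        field_simp
    _ ≤ (8 + 40 / (Real.log 2)^2) * K^2 := by
        have hK2 : 1 ≤ K^2 := by nlinarith
        have h40 : (0:ℝ) ≤ 40 / (Real.log 2)^2 := by positivity
        have h40' : 40 / (Real.log 2)^2 ≤ 40 / (Real.log 2)^2 * K^2 :=
          le_mul_of_one_le_right h40 hK2
        have e : (8 + 40 / (Real.log 2)^2) * K^2 = 8*K^2 + 40 / (Real.log 2)^2 * K^2 := by ring
        have e2 : 32 / (Real.log 2)^2 + 8 / (Real.log 2)^2 = 40 / (Real.log 2)^2 := by ring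
        linarith [h40', e, e2]
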